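/- arXiv:2505.03298 — 3 statements merged into one kernel-verified Lean document; each statement's English description precedes it below -/
import Mathlib

section
/- The exact log-kernel on ℝ is sharply-σ^b(1/2)-regular. For every integer b ≥ 2 there exists a sequence (K_j)_{j≥0} of continuous nonnegative positive definite functions K_j : ℝ → ℝ such that: K_j(t) = 0 whenever |t| > b^{−j}; K_j(0) = log b for every j ≥ 1; sup_{j≥0} sup_{0<|t|≤b^{−j}} |K_j(t) − K_j(0)| / (b^{j}|t|) < ∞; and ∑_{j=0}^∞ K_j(t) = max{log(1/|t|), 0} for every real t ≠ 0. -/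
noncomputable section

/-- A function `F` on an additive group is positive definite if for all finite families of
points `t_i` and complex coefficients `c_i`, the real part of
`∑_{i,l} c_i conj(c_l) F(t_i − t_l)` is nonnegative. -/
def IsPosDefFn {E : Type*} [AddGroup E] (F : E → ℝ) : Prop :=
  ∀ (k : ℕ) (t : Fin k → E) (c : Fin k → ℂ),
    0 ≤ (∑ i, ∑ l, c i * (starRingEnd ℂ) (c l) * ((F (t i - t l) : ℝ) : ℂ)).re


open MeasureTheory Set

noncomputable section

lemma tri_integrable (p q : ℝ) :
    Integrable (Set.indicator (Set.Ioc p q) (fun _ => (1:ℝ))) volume := by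
  rw [integrable_indicator_iff measurableSet_Ioc]
  exact (integrableOn_const_iff (C := (1:ℝ))).mpr (Or.inr measure_Ioc_lt_top)

lemma tri_pd_real (u : ℝ) (k : ℕ) (t a : Fin k → ℝ) :
    0 ≤ ∑ i, ∑ l, a i * a l * max (u - |t i - t l|) 0 := by
  set f : Fin k → ℝ → ℝ := fun i x => a i * Set.indicator (Set.Ioc (t i) (t i + u)) 1 x with hf
  have hprod : ∀ i l : Fin k, (fun x => f i x * f l x)
      = fun x => (a i * a l) * Set.indicator (Set.Ioc (t i) (t i + u) ∩ Set.Ioc (t l) (t l + u)) 1 x := by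
    intro i l; funext x
    have := Set.inter_indicator_mul (M₀ := ℝ) (s := Set.Ioc (t i) (t i + u))
      (t := Set.Ioc (t l) (t l + u)) (fun _ => (1:ℝ)) (fun _ => (1:ℝ)) x
    simp only [hf]
    simp only [mul_one] at this ⊢
    rw [mul_mul_mul_comm]
    congr 1
    exact this.symm
  have hint : ∀ i l : Fin k, Integrable (fun x => f i x * f l x) volume := by
    intro i l
    rw [hprod i l]
    exact ((integrable_indicator_iff (measurableSet_Ioc.inter measurableSet_Ioc)).2
      ((integrableOn_const_iff (C := (1:ℝ))).mpr (Or.inr (lt_of_le_of_lt (measure_mono Set.inter_subset_left) measure_Ioc_lt_top)))).const_mul _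
  have hterm : ∀ i l : Fin k, ∫ x, f i x * f l x = a i * a l * max (u - |t i - t l|) 0 := by
    intro i l
    rw [hprod i l, MeasureTheory.integral_const_mul,
      integral_indicator_one (measurableSet_Ioc.inter measurableSet_Ioc)]
    congr 1
    rw [Set.Ioc_inter_Ioc, Real.volume_real_Ioc]
    congr 1
    have h1 : (t i + u) ⊓ (t l + u) = (t i ⊓ t l) + u := by
      rcases le_total (t i) (t l) with h | h <;> simp [min_def, h] <;> linarith
    have h2 : |t i - t l| = (t i ⊔ t l) - (t i ⊓ t l) := by
      rcases le_total (t i) (t l) with h | h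
      · rw [abs_sub_comm, abs_of_nonneg (by linarith)]
        simp [max_def, min_def, h]
      · rw [abs_of_nonneg (by linarith)]
        simp [max_def, min_def, h]
    rw [h1, h2]; ring
  calc (0:ℝ) ≤ ∫ x, (∑ i, f i x) * (∑ l, f l x) := by
        apply integral_nonneg; intro x; exact mul_self_nonneg _
    _ = ∫ x, ∑ i, ∑ l, f i x * f l x := by
        congr 1; funext x; rw [Finset.sum_mul_sum]
    _ = ∑ i, ∫ x, ∑ l, f i x * f l x := by
        exact MeasureTheory.integral_finset_sum (f := fun i x => ∑ l, f i x * f l x) _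
          (fun i _ => integrable_finset_sum _ (fun l _ => hint i l))
    _ = ∑ i, ∑ l, ∫ x, f i x * f l x := by
        exact Finset.sum_congr rfl fun i _ => MeasureTheory.integral_finset_sum _ (fun l _ => hint i l)
    _ = ∑ i, ∑ l, a i * a l * max (u - |t i - t l|) 0 := by
        exact Finset.sum_congr rfl fun i _ => Finset.sum_congr rfl fun l _ => hterm i l

end

noncomputable section


lemma isPosDefFn_of_real {F : ℝ → ℝ}
    (h : ∀ (k : ℕ) (t : Fin k → ℝ) (a : Fin k → ℝ), 0 ≤ ∑ i, ∑ l, a i * a l * F (t i - t l)) :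
    IsPosDefFn F := by
  intro k t c
  have hre : (∑ i, ∑ l, c i * (starRingEnd ℂ) (c l) * ((F (t i - t l) : ℝ) : ℂ)).re
      = (∑ i, ∑ l, (c i).re * (c l).re * F (t i - t l))
        + ∑ i, ∑ l, (c i).im * (c l).im * F (t i - t l) := by
    rw [← Finset.sum_add_distrib, Complex.re_sum]
    refine Finset.sum_congr rfl fun i _ => ?_
    rw [← Finset.sum_add_distrib, Complex.re_sum]
    refine Finset.sum_congr rfl fun l _ => ?_
    simp [Complex.mul_re, Complex.mul_im]
    ring
  rw [hre]
  exact add_nonneg (h k t _) (h k t _)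

lemma isPosDefFn_add {F G : ℝ → ℝ} (hF : IsPosDefFn F) (hG : IsPosDefFn G) :
    IsPosDefFn (fun t => F t + G t) := by
  intro k t c
  have : (∑ i, ∑ l, c i * (starRingEnd ℂ) (c l) * (((F (t i - t l) + G (t i - t l) : ℝ)) : ℂ))
      = (∑ i, ∑ l, c i * (starRingEnd ℂ) (c l) * ((F (t i - t l) : ℝ) : ℂ))
        + ∑ i, ∑ l, c i * (starRingEnd ℂ) (c l) * ((G (t i - t l) : ℝ) : ℂ) := by
    rw [← Finset.sum_add_distrib]
    refine Finset.sum_congr rfl fun i _ => ?_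
    rw [← Finset.sum_add_distrib]
    refine Finset.sum_congr rfl fun l _ => ?_
    push_cast
    ring
  simp only [this, Complex.add_re]
  exact add_nonneg (hF k t c) (hG k t c)

lemma isPosDefFn_scale {F : ℝ → ℝ} (hF : IsPosDefFn F) (lam : ℝ) :
    IsPosDefFn (fun t => F (lam * t)) := by
  intro k t c
  have := hF k (fun i => lam * t i) c
  simpa [mul_sub] using this

end

noncomputable section

lemma cont_on_term (s c : ℝ) (hc : 0 < c) (hc1 : c ≤ 1) (r : ℝ) :
    IntervalIntegrable (fun u : ℝ => r * (max (u - s) 0 / u ^ 2)) volume c 1 := by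
  apply ContinuousOn.intervalIntegrable
  apply ContinuousOn.mul continuousOn_const
  apply ContinuousOn.div
  · exact ((continuous_id.sub continuous_const).max continuous_const).continuousOn
  · exact (continuous_pow 2).continuousOn
  · intro u hu
    rw [Set.uIcc_of_le hc1] at hu
    have : 0 < u := lt_of_lt_of_le hc hu.1
    positivity

lemma G_pd (c : ℝ) (hc : 0 < c) (hc1 : c ≤ 1) :
    IsPosDefFn (fun t => ∫ u in c..1, max (u - |t|) 0 / u ^ 2) := by
  apply isPosDefFn_of_real
  intro k t a
  have hInt : ∀ i : Fin k, IntervalIntegrable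
      (fun u => ∑ l, a i * a l * (max (u - |t i - t l|) 0 / u ^ 2)) volume c 1 := by
    intro i
    have := IntervalIntegrable.sum (μ := volume) (a := c) (b := 1) Finset.univ
      (f := fun l u => a i * a l * (max (u - |t i - t l|) 0 / u ^ 2))
      (fun l _ => cont_on_term _ c hc hc1 _)
    convert this using 1
    · rfl
    funext u
    simp
  have hswap : ∑ i, ∑ l, a i * a l * (∫ u in c..1, max (u - |t i - t l|) 0 / u ^ 2)
      = ∫ u in c..1, ∑ i, ∑ l, a i * a l * (max (u - |t i - t l|) 0 / u ^ 2) :=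
    calc ∑ i, ∑ l, a i * a l * (∫ u in c..1, max (u - |t i - t l|) 0 / u ^ 2)
        = ∑ i, ∑ l, ∫ u in c..1, a i * a l * (max (u - |t i - t l|) 0 / u ^ 2) :=
          Finset.sum_congr rfl fun i _ => Finset.sum_congr rfl fun l _ =>
            (intervalIntegral.integral_const_mul _ _).symm
      _ = ∑ i, ∫ u in c..1, ∑ l, a i * a l * (max (u - |t i - t l|) 0 / u ^ 2) :=
          Finset.sum_congr rfl fun i _ =>
            (intervalIntegral.integral_finset_sum (fun l _ => cont_on_term _ c hc hc1 _)).symm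
      _ = ∫ u in c..1, ∑ i, ∑ l, a i * a l * (max (u - |t i - t l|) 0 / u ^ 2) :=
          (intervalIntegral.integral_finset_sum
            (f := fun i u => ∑ l, a i * a l * (max (u - |t i - t l|) 0 / u ^ 2))
            (fun i _ => hInt i)).symm
  rw [hswap]
  apply intervalIntegral.integral_nonneg hc1
  intro u hu
  have hu0 : 0 < u := lt_of_lt_of_le hc hu.1
  have key := tri_pd_real u k t a
  have : ∑ i, ∑ l, a i * a l * (max (u - |t i - t l|) 0 / u ^ 2)
      = (∑ i, ∑ l, a i * a l * max (u - |t i - t l|) 0) / u ^ 2 := by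
    rw [Finset.sum_div]
    refine Finset.sum_congr rfl fun i _ => ?_
    rw [Finset.sum_div]
    refine Finset.sum_congr rfl fun l _ => ?_
    ring
  rw [this]
  positivity

end

noncomputable section

def gfun (b : ℕ) (x : ℝ) : ℝ :=
  if x ≤ 1/(b:ℝ) then Real.log b - ((b:ℝ)-1)*x
  else if x ≤ 1 then x - 1 - Real.log (max x (1/(b:ℝ))) else 0

def Lfun (x : ℝ) : ℝ := max (-Real.log x) 0 - max (1 - x) 0

variable {b : ℕ}

lemma hbR (hb : 2 ≤ b) : (2:ℝ) ≤ (b:ℝ) := by exact_mod_cast hb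
lemma hb0 (hb : 2 ≤ b) : (0:ℝ) < (b:ℝ) := by linarith [hbR hb]
lemma hbinv (hb : 2 ≤ b) : 0 < 1/(b:ℝ) := by have := hb0 hb; positivity

lemma g_cont (hb : 2 ≤ b) : Continuous (gfun b) := by
  have h2 : (2:ℝ) ≤ b := hbR hb
  have h0 : (0:ℝ) < b := by linarith
  have hinv : 0 < 1/(b:ℝ) := by positivity
  have hinv1 : 1/(b:ℝ) ≤ 1 := by
    rw [div_le_one h0]; linarith
  unfold gfun
  apply Continuous.if_le
  · exact continuous_const.sub (continuous_const.mul continuous_id)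
  · apply Continuous.if_le
    · have hlog : Continuous fun x : ℝ => Real.log (max x (1/(b:ℝ))) := by
        apply Real.continuousOn_log.comp_continuous (continuous_id.max continuous_const)
        intro x
        simp only [Set.mem_compl_iff, Set.mem_singleton_iff]
        exact ne_of_gt (lt_of_lt_of_le hinv (le_max_right _ _))
      exact ((continuous_id.sub continuous_const).sub hlog)
    · exact continuous_const
    · exact continuous_id
    · exact continuous_const
    · intro x hx
      rw [hx, max_eq_left hinv1, Real.log_one]
      ring
  · exact continuous_id
  · exact continuous_const
  · intro x hx
    rw [hx, if_pos hinv1, max_self, one_div, Real.log_inv]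
    field_simp
    ring

lemma g_nonneg (hb : 2 ≤ b) {x : ℝ} (hx : 0 ≤ x) : 0 ≤ gfun b x := by
  have h2 : (2:ℝ) ≤ b := hbR hb
  have h0 : (0:ℝ) < b := by linarith
  unfold gfun
  split_ifs with h1 h2'
  · have hlog : Real.log (1/(b:ℝ)) ≤ 1/(b:ℝ) - 1 := Real.log_le_sub_one_of_pos (by positivity)
    rw [one_div, Real.log_inv, inv_eq_one_div] at hlog
    have : ((b:ℝ)-1)*x ≤ ((b:ℝ)-1)*(1/b) := by
      apply mul_le_mul_of_nonneg_left h1 (by linarith)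
    have hbb : ((b:ℝ)-1)*(1/b) = 1 - 1/b := by field_simp
    linarith
  · push_neg at h1
    have hx0 : 0 < x := lt_trans (by positivity) h1
    rw [max_eq_left (le_of_lt h1)]
    have := Real.log_le_sub_one_of_pos hx0
    linarith
  · exact le_refl 0

lemma g_zero (hb : 2 ≤ b) : gfun b 0 = Real.log b := by
  have hinv : 0 < 1/(b:ℝ) := hbinv hb
  unfold gfun
  rw [if_pos (le_of_lt hinv)]
  ring

lemma g_eq_zero (hb : 2 ≤ b) {x : ℝ} (hx : 1 < x) : gfun b x = 0 := by
  have h2 : (2:ℝ) ≤ b := hbR hb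
  have hinv1 : 1/(b:ℝ) ≤ 1 := by rw [div_le_one (by linarith)]; linarith
  unfold gfun
  rw [if_neg (by linarith), if_neg (by linarith)]

lemma g_le_log (hb : 2 ≤ b) {x : ℝ} (hx : 0 ≤ x) (hx1 : x ≤ 1) :
    |gfun b x - Real.log b| ≤ ((b:ℝ)*((b:ℝ)-1)) * x := by
  have h2 : (2:ℝ) ≤ b := hbR hb
  have h0 : (0:ℝ) < b := by linarith
  have hlogb : 0 ≤ Real.log b := Real.log_nonneg (by linarith)
  unfold gfun
  split_ifs with h1 h2'
  · rw [show Real.log b - ((b:ℝ)-1)*x - Real.log b = -(((b:ℝ)-1)*x) by ring, abs_neg,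
      abs_of_nonneg (by nlinarith)]
    nlinarith [mul_nonneg (mul_nonneg (by linarith : (0:ℝ) ≤ (b:ℝ)-1) (by linarith : (0:ℝ) ≤ (b:ℝ)-1)) hx]
  · push_neg at h1
    have hx0 : 0 < x := lt_trans (by positivity) h1
    rw [max_eq_left (le_of_lt h1)]
    have hg0 : 0 ≤ x - 1 - Real.log x := by
      have := Real.log_le_sub_one_of_pos hx0
      linarith
    have hgle : x - 1 - Real.log x ≤ Real.log b := by
      -- log b - (x - 1 - log x) = log(bx) + 1 - x ≥ 0 since bx > 1 and x ≤ 1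
      have hbx : 1 < (b:ℝ)*x := by
        have : (b:ℝ)*(1/b) < (b:ℝ)*x := by
          apply mul_lt_mul_of_pos_left h1 h0
        rwa [mul_one_div_cancel (ne_of_gt h0)] at this
      have hlbx : 0 ≤ Real.log ((b:ℝ)*x) := Real.log_nonneg (le_of_lt hbx)
      rw [Real.log_mul (ne_of_gt h0) (ne_of_gt hx0)] at hlbx
      linarith
    rw [abs_sub_comm, abs_of_nonneg (by linarith)]
    have hlb : Real.log b ≤ (b:ℝ) - 1 := by
      have := Real.log_le_sub_one_of_pos h0
      linarith
    have hbx : 1 ≤ (b:ℝ)*x := by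
      have : (b:ℝ)*(1/b) < (b:ℝ)*x := mul_lt_mul_of_pos_left h1 h0
      rw [mul_one_div_cancel (ne_of_gt h0)] at this
      linarith
    nlinarith

lemma L_zero {x : ℝ} (hx : 1 ≤ x) : Lfun x = 0 := by
  unfold Lfun
  rw [max_eq_right, max_eq_right]
  · ring
  · linarith
  · simp only [neg_nonpos]
    exact Real.log_nonneg hx

lemma g_eq_L (hb : 2 ≤ b) {x : ℝ} (hx : 0 < x) : gfun b x = Lfun x - Lfun ((b:ℝ)*x) := by
  have h2 : (2:ℝ) ≤ b := hbR hb
  have h0 : (0:ℝ) < b := by linarith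
  have hlogb : 0 ≤ Real.log b := Real.log_nonneg (by linarith)
  unfold gfun Lfun
  split_ifs with h1 h2'
  · -- x ≤ 1/b
    have hx1 : x ≤ 1 := le_trans h1 (by rw [div_le_one h0]; linarith)
    have hbx1 : (b:ℝ)*x ≤ 1 := by
      calc (b:ℝ)*x ≤ (b:ℝ)*(1/b) := mul_le_mul_of_nonneg_left h1 (le_of_lt h0)
        _ = 1 := mul_one_div_cancel (ne_of_gt h0)
    have hlx : 0 ≤ -Real.log x := by
      simp only [neg_nonneg]
      exact Real.log_nonpos (le_of_lt hx) hx1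
    have hlbx : 0 ≤ -Real.log ((b:ℝ)*x) := by
      simp only [neg_nonneg]
      exact Real.log_nonpos (by positivity) hbx1
    rw [max_eq_left hlx, max_eq_left hlbx, max_eq_left (by linarith), max_eq_left (by linarith),
      Real.log_mul (ne_of_gt h0) (ne_of_gt hx)]
    ring
  · -- 1/b < x ≤ 1
    push_neg at h1
    rw [max_eq_left (le_of_lt h1)]
    have hbx1 : 1 ≤ (b:ℝ)*x := by
      have : (b:ℝ)*(1/b) < (b:ℝ)*x := mul_lt_mul_of_pos_left h1 h0
      rw [mul_one_div_cancel (ne_of_gt h0)] at this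
      linarith
    have hlx : 0 ≤ -Real.log x := by
      simp only [neg_nonneg]
      exact Real.log_nonpos (le_of_lt hx) h2'
    rw [max_eq_left hlx, max_eq_left (by linarith),
      max_eq_right (by simp only [neg_nonpos]; exact Real.log_nonneg hbx1),
      max_eq_right (by linarith)]
    ring
  · -- x > 1
    push_neg at h2'
    have hbx1 : 1 ≤ (b:ℝ)*x := by nlinarith
    rw [max_eq_right (by simp only [neg_nonpos]; exact Real.log_nonneg (le_of_lt h2')),
      max_eq_right (by linarith),
      max_eq_right (by simp only [neg_nonpos]; exact Real.log_nonneg hbx1),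
      max_eq_right (by linarith)]
    ring

end

noncomputable section

lemma intInt_sub (s p q : ℝ) (hp : 0 < p) (hpq : p ≤ q) :
    IntervalIntegrable (fun u : ℝ => (u - s)/u^2) volume p q := by
  apply ContinuousOn.intervalIntegrable
  apply ContinuousOn.div
  · exact (continuous_id.sub continuous_const).continuousOn
  · exact (continuous_pow 2).continuousOn
  · intro u hu
    rw [Set.uIcc_of_le hpq] at hu
    have : 0 < u := lt_of_lt_of_le hp hu.1
    positivity

lemma intInt_max (s p q : ℝ) (hp : 0 < p) (hpq : p ≤ q) :
    IntervalIntegrable (fun u : ℝ => max (u - s) 0/u^2) volume p q := by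
  apply ContinuousOn.intervalIntegrable
  apply ContinuousOn.div
  · exact ((continuous_id.sub continuous_const).max continuous_const).continuousOn
  · exact (continuous_pow 2).continuousOn
  · intro u hu
    rw [Set.uIcc_of_le hpq] at hu
    have : 0 < u := lt_of_lt_of_le hp hu.1
    positivity

lemma integral_tri_of_le (s p q : ℝ) (hp : 0 < p) (hpq : p ≤ q) (hs : s ≤ p) :
    ∫ u in p..q, max (u - s) 0 / u^2 = (Real.log q + s/q) - (Real.log p + s/p) := by
  have hq : 0 < q := lt_of_lt_of_le hp hpq
  have hcong : ∫ u in p..q, max (u - s) 0 / u^2 = ∫ u in p..q, (u - s)/u^2 := by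
    apply intervalIntegral.integral_congr
    intro u hu
    rw [Set.uIcc_of_le hpq] at hu
    dsimp only
    rw [max_eq_left (by linarith [hu.1] : (0:ℝ) ≤ u - s)]
  rw [hcong]
  have hderiv : ∀ u ∈ Set.uIcc p q, HasDerivAt (fun v => Real.log v + s/v) ((u - s)/u^2) u := by
    intro u hu
    rw [Set.uIcc_of_le hpq] at hu
    have hu0 : 0 < u := lt_of_lt_of_le hp hu.1
    have h1 : HasDerivAt Real.log u⁻¹ u := Real.hasDerivAt_log (ne_of_gt hu0)
    have h2 : HasDerivAt (fun v : ℝ => s/v) (s * (-(u^2)⁻¹)) u := by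
      have heq : (fun v : ℝ => s / v) = fun v => s * v⁻¹ := by
        funext v; rw [div_eq_mul_inv]
      rw [heq]
      exact (hasDerivAt_inv (ne_of_gt hu0)).const_mul s
    have := h1.add h2
    refine this.congr_deriv ?_
    field_simp
    ring
  rw [intervalIntegral.integral_eq_sub_of_hasDerivAt hderiv (intInt_sub s p q hp hpq)]

lemma integral_tri_zero (s p q : ℝ) (hpq : p ≤ q) (hs : q ≤ s) :
    ∫ u in p..q, max (u - s) 0 / u^2 = 0 := by
  have hcong : ∫ u in p..q, max (u - s) 0 / u^2 = ∫ u in p..q, (0:ℝ) := by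
    apply intervalIntegral.integral_congr
    intro u hu
    rw [Set.uIcc_of_le hpq] at hu
    dsimp only
    rw [max_eq_right (by linarith [hu.2] : u - s ≤ 0), zero_div]
  rw [hcong, intervalIntegral.integral_zero]

lemma g_int_repr {b : ℕ} (hb : 2 ≤ b) (s : ℝ) (hs : 0 ≤ s) :
    gfun b s = ∫ u in (1/(b:ℝ))..1, max (u - s) 0 / u^2 := by
  have h2 : (2:ℝ) ≤ b := hbR hb
  have h0 : (0:ℝ) < b := by linarith
  have hinv : 0 < 1/(b:ℝ) := by positivity
  have hinv1 : 1/(b:ℝ) ≤ 1 := by rw [div_le_one h0]; linarith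
  rcases le_or_gt s (1/(b:ℝ)) with hcase | hcase
  · rw [integral_tri_of_le s _ _ hinv hinv1 hcase]
    unfold gfun
    rw [if_pos hcase, Real.log_one, one_div, Real.log_inv]
    field_simp
    ring
  · rcases le_or_gt s 1 with hcase2 | hcase2
    · have hsplit := intervalIntegral.integral_add_adjacent_intervals
        (intInt_max s (1/(b:ℝ)) s hinv (le_of_lt hcase)) (intInt_max s s 1 (lt_trans hinv hcase) hcase2)
      rw [← hsplit, integral_tri_zero s _ _ (le_of_lt hcase) (le_refl s),
        integral_tri_of_le s s 1 (lt_trans hinv hcase) hcase2 (le_refl s)]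
      unfold gfun
      rw [if_neg (not_le.mpr hcase), if_pos hcase2, max_eq_left (le_of_lt hcase), Real.log_one]
      have hs0 : (0:ℝ) < s := lt_trans hinv hcase
      field_simp
      ring
    · rw [integral_tri_zero s _ _ hinv1 (le_of_lt hcase2)]
      exact g_eq_zero hb hcase2

end

noncomputable section


section Main

/-- The exact log-kernel on `ℝ` is sharply-`σ^b(1/2)`-regular.
For every integer `b ≥ 2` there is a sequence `(K_j)` of continuous nonnegative positive
definite functions on `ℝ` with `K_j(t) = 0` for `|t| > b^{−j}`, `K_j(0) = log b` for `j ≥ 1`,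
uniform rescaled Hölder-`1/2` regularity at the origin, and
`∑_j K_j(t) = log₊(1/|t|)` for every `t ≠ 0`. -/
theorem exact_log_kernel_sharply_sigma_regular (b : ℕ) (hb : 2 ≤ b) :
    ∃ K : ℕ → ℝ → ℝ,
      (∀ j, Continuous (K j)) ∧
      (∀ j t, 0 ≤ K j t) ∧
      (∀ j, IsPosDefFn (K j)) ∧
      (∀ (j : ℕ) (t : ℝ), (b : ℝ) ^ (-(j : ℝ)) < |t| → K j t = 0) ∧
      (∀ j : ℕ, 1 ≤ j → K j 0 = Real.log b) ∧
      (∃ C : ℝ, ∀ (j : ℕ) (t : ℝ), t ≠ 0 → |t| ≤ (b : ℝ) ^ (-(j : ℝ)) →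
        |K j t - K j 0| ≤ C * (b : ℝ) ^ (j : ℝ) * |t|) ∧
      (∀ t : ℝ, t ≠ 0 → ∑' j, K j t = max (Real.log (1 / |t|)) 0) := by
  have h2 : (2:ℝ) ≤ b := hbR hb
  have h0 : (0:ℝ) < b := by linarith
  have h1b : (1:ℝ) ≤ b := by linarith
  have hinv : 0 < 1/(b:ℝ) := by positivity
  have hinv1 : 1/(b:ℝ) ≤ 1 := by rw [div_le_one h0]; linarith
  have hneg : ∀ j : ℕ, (b:ℝ)^(-(j:ℝ)) = ((b:ℝ)^j)⁻¹ := fun j => by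
    rw [Real.rpow_neg h0.le, Real.rpow_natCast]
  have hrpow : ∀ j : ℕ, (b:ℝ)^((j:ℕ):ℝ) = (b:ℝ)^j := fun j => Real.rpow_natCast _ _
  refine ⟨fun j t => (if j = 0 then max (1 - |t|) 0 else 0) + gfun b ((b:ℝ)^j * |t|),
    ?_, ?_, ?_, ?_, ?_, ?_, ?_⟩
  · -- continuity
    intro j
    apply Continuous.add
    · rcases Nat.eq_zero_or_pos j with hj | hj
      · subst hj
        simp only [if_pos]
        exact (continuous_const.sub continuous_abs).max continuous_const
      · simp only [if_neg (Nat.pos_iff_ne_zero.mp hj)]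
        exact continuous_const
    · exact (g_cont hb).comp (continuous_const.mul continuous_abs)
  · -- nonneg
    intro j t
    apply add_nonneg
    · split_ifs
      · exact le_max_right _ _
      · exact le_refl 0
    · exact g_nonneg hb (by positivity)
  · -- positive definite
    intro j
    have hG : IsPosDefFn (fun t : ℝ => gfun b ((b:ℝ)^j * |t|)) := by
      have scaled := isPosDefFn_scale (G_pd (1/(b:ℝ)) hinv hinv1) ((b:ℝ)^j)
      have heq : (fun t : ℝ => gfun b ((b:ℝ)^j * |t|))
          = fun t : ℝ => ∫ u in (1/(b:ℝ))..1, max (u - |(b:ℝ)^j * t|) 0 / u^2 := by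
        funext t
        rw [abs_mul, abs_of_nonneg (pow_nonneg h0.le j)]
        exact g_int_repr hb _ (by positivity)
      rw [heq]
      exact scaled
    rcases Nat.eq_zero_or_pos j with hj | hj
    · subst hj
      have htri : IsPosDefFn (fun t : ℝ => max (1 - |t|) 0) := by
        apply isPosDefFn_of_real
        intro k t a
        have := tri_pd_real 1 k t a
        simpa using this
      have := isPosDefFn_add htri hG
      simpa using this
    · have hj0 : j ≠ 0 := Nat.pos_iff_ne_zero.mp hj
      simp only [if_neg hj0, zero_add]
      exact hG
  · -- support
    intro j t ht
    dsimp only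
    rw [hneg j] at ht
    have hpj : (0:ℝ) < (b:ℝ)^j := pow_pos h0 j
    have hgt : 1 < (b:ℝ)^j * |t| := by
      rw [inv_lt_iff_one_lt_mul₀' hpj] at ht
      linarith [ht]
    rw [g_eq_zero hb hgt]
    split_ifs with hj
    · subst hj
      simp only [pow_zero, one_mul] at hgt
      rw [max_eq_right (by linarith)]
      ring
    · ring
  · -- value at zero
    intro j hj
    dsimp only
    rw [if_neg (by omega : j ≠ 0)]
    simp only [abs_zero, mul_zero, zero_add]
    exact g_zero hb
  · -- Hölder
    refine ⟨(b:ℝ)*((b:ℝ)-1) + 1, ?_⟩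
    intro j t ht hle
    dsimp only
    rw [hneg j] at hle
    have hpj : (0:ℝ) < (b:ℝ)^j := pow_pos h0 j
    have hx0 : 0 ≤ (b:ℝ)^j * |t| := by positivity
    have hx1 : (b:ℝ)^j * |t| ≤ 1 := by
      calc (b:ℝ)^j * |t| ≤ (b:ℝ)^j * ((b:ℝ)^j)⁻¹ := by
            apply mul_le_mul_of_nonneg_left hle hpj.le
        _ = 1 := mul_inv_cancel₀ hpj.ne'
    have hgb := g_le_log hb hx0 hx1
    rw [hrpow j]
    have hK0 : gfun b ((b:ℝ)^j * |0|) = Real.log b := by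
      simp only [abs_zero, mul_zero]
      exact g_zero hb
    split_ifs with hj
    · subst hj
      simp only [pow_zero, one_mul] at hgb hx1 ⊢
      simp only [abs_zero, sub_zero]
      rw [show (1:ℝ) ⊔ 0 = 1 from max_eq_left zero_le_one]
      have habs : |max (1 - |t|) 0 + gfun b |t| - (1 + gfun b 0)|
          ≤ |max (1 - |t|) 0 - 1| + |gfun b |t| - Real.log b| := by
        rw [g_zero hb]
        calc |max (1 - |t|) 0 + gfun b |t| - (1 + Real.log b)|
            = |(max (1 - |t|) 0 - 1) + (gfun b |t| - Real.log b)| := by ring_nf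
          _ ≤ _ := abs_add_le _ _
      have htri : |max (1 - |t|) 0 - 1| = |t| := by
        rw [max_eq_left (by linarith : (0:ℝ) ≤ 1 - |t|)]
        simp [abs_of_nonneg (abs_nonneg t)]
      have habst : (0:ℝ) ≤ |t| := abs_nonneg t
      calc |max (1 - |t|) 0 + gfun b |t| - (1 + gfun b 0)| ≤ |t| + ((b:ℝ)*((b:ℝ)-1)) * |t| := by
            rw [g_zero hb] at habs ⊢
            rw [htri] at habs
            linarith [habs, hgb]
        _ = ((b:ℝ)*((b:ℝ)-1) + 1) * 1 * |t| := by ring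
    · simp only [zero_add]
      rw [hK0]
      calc |gfun b ((b:ℝ)^j * |t|) - Real.log b| ≤ ((b:ℝ)*((b:ℝ)-1)) * ((b:ℝ)^j * |t|) := hgb
        _ ≤ ((b:ℝ)*((b:ℝ)-1) + 1) * (b:ℝ)^j * |t| := by nlinarith [abs_nonneg t, hpj]
  · -- tsum
    intro t ht
    dsimp only
    have hs : 0 < |t| := abs_pos.mpr ht
    obtain ⟨N, hN⟩ := pow_unbounded_of_one_lt (1/|t|) (by linarith : (1:ℝ) < b)
    have hNt : 1 < (b:ℝ)^N * |t| := by
      rw [div_lt_iff₀ hs] at hN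
      linarith
    set M := N + 1 with hM
    have hzero : ∀ j ∉ Finset.range M,
        ((if j = 0 then max (1 - |t|) 0 else 0) + gfun b ((b:ℝ)^j * |t|)) = 0 := by
      intro j hj
      rw [Finset.mem_range, not_lt] at hj
      have hj0 : j ≠ 0 := by omega
      have hle : (b:ℝ)^N ≤ (b:ℝ)^j := pow_le_pow_right₀ h1b (by omega)
      have hgt : 1 < (b:ℝ)^j * |t| := by
        have := mul_le_mul_of_nonneg_right hle hs.le
        linarith
      rw [if_neg hj0, g_eq_zero hb hgt]
      ring
    rw [tsum_eq_sum hzero, Finset.sum_add_distrib]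
    have hfirst : ∑ j ∈ Finset.range M, (if j = 0 then max (1 - |t|) 0 else 0)
        = max (1 - |t|) 0 := by
      rw [Finset.sum_ite_eq' (Finset.range M) 0 (fun _ => max (1 - |t|) 0)]
      simp [Finset.mem_range.mpr (by omega : 0 < M)]
    have hsecond : ∑ j ∈ Finset.range M, gfun b ((b:ℝ)^j * |t|)
        = Lfun ((b:ℝ)^0 * |t|) - Lfun ((b:ℝ)^M * |t|) := by
      rw [show (∑ j ∈ Finset.range M, gfun b ((b:ℝ)^j * |t|))
          = ∑ j ∈ Finset.range M, (Lfun ((b:ℝ)^j * |t|) - Lfun ((b:ℝ)^(j+1) * |t|)) from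
        Finset.sum_congr rfl fun j _ => by
          rw [g_eq_L hb (by positivity : (0:ℝ) < (b:ℝ)^j * |t|)]
          congr 2
          rw [pow_succ]
          ring]
      exact Finset.sum_range_sub' (fun j => Lfun ((b:ℝ)^j * |t|)) M
    rw [hfirst, hsecond]
    have hLM : Lfun ((b:ℝ)^M * |t|) = 0 := by
      apply L_zero
      have hle : (b:ℝ)^N ≤ (b:ℝ)^M := pow_le_pow_right₀ h1b (by omega)
      have := mul_le_mul_of_nonneg_right hle hs.le
      linarith
    rw [hLM, pow_zero, one_mul]
    unfold Lfun
    rw [one_div, Real.log_inv]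
    ring


end Main

end
end
end

section
/- Quadratic Hölder estimate for exponentiated kernels (key estimate of Lemma 3.11). Let d ≥ 1 be an integer, γ ∈ ℝ, and let R : [0,1]^d × [0,1]^d → ℝ be a bounded function such that sup_{t≠s} |R(t,t) − R(s,s)| / |t−s| < ∞ and sup_{t≠s} |R(t,t) + R(s,s) − 2R(t,s)| / |t−s|² < ∞ (suprema over t, s ∈ [0,1]^d with t ≠ s). Then sup_{t≠s} |exp(γ²R(t,t)) + exp(γ²R(s,s)) − 2·exp(γ²R(t,s))| / |t−s|² < ∞. (For a centered Gaussian process Z with covariance kernel R, the numerator equals 𝔼[|P(t) − P(s)|²] for P(t) = exp(γZ(t) − (γ²/2)R(t,t)).) -/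
noncomputable section

lemma exp_lip {x y M : ℝ} (hx : x ≤ M) (hy : y ≤ M) :
    |Real.exp x - Real.exp y| ≤ Real.exp M * |x - y| := by
  wlog h : y ≤ x generalizing x y
  · rw [abs_sub_comm, abs_sub_comm x y]; exact this hy hx (le_of_not_ge h)
  rw [abs_of_nonneg (sub_nonneg.2 (Real.exp_le_exp.2 h)), abs_of_nonneg (sub_nonneg.2 h)]
  have key : Real.exp (x - y) - 1 ≤ (x - y) * Real.exp (x - y) := by
    have h0 := Real.add_one_le_exp (-(x - y))
    have h2 : Real.exp (x - y) * (-(x - y) + 1) ≤ Real.exp (x - y) * Real.exp (-(x - y)) :=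
      mul_le_mul_of_nonneg_left h0 (Real.exp_pos _).le
    rw [← Real.exp_add] at h2
    simp only [add_neg_cancel, Real.exp_zero] at h2
    nlinarith
  have h1 : Real.exp x - Real.exp y = Real.exp y * (Real.exp (x - y) - 1) := by
    rw [mul_sub, ← Real.exp_add]; ring_nf
  rw [h1]
  calc Real.exp y * (Real.exp (x - y) - 1)
      ≤ Real.exp y * ((x - y) * Real.exp (x - y)) := by
        exact mul_le_mul_of_nonneg_left key (Real.exp_pos y).le
    _ = Real.exp x * (x - y) := by
        rw [show Real.exp y * ((x - y) * Real.exp (x - y)) =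
          (x - y) * (Real.exp y * Real.exp (x - y)) by ring, ← Real.exp_add]
        ring_nf
    _ ≤ Real.exp M * (x - y) :=
        mul_le_mul_of_nonneg_right (Real.exp_le_exp.2 hx) (sub_nonneg.2 h)

/-- The closed unit cube `[0,1]^d` in `ℝ^d`. -/
def closedUnitCube (d : ℕ) : Set (EuclideanSpace ℝ (Fin d)) :=
  {t | ∀ β, t β ∈ Set.Icc (0 : ℝ) 1}

/-- Quadratic Hölder estimate for exponentiated kernels.
If `R : [0,1]^d × [0,1]^d → ℝ` is bounded, the diagonal `t ↦ R(t,t)` is Lipschitz, and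
`|R(t,t) + R(s,s) − 2R(t,s)| = O(|t−s|²)`, then
`|exp(γ²R(t,t)) + exp(γ²R(s,s)) − 2 exp(γ²R(t,s))| = O(|t−s|²)` uniformly on `[0,1]^d`. -/
theorem exp_kernel_quadratic_holder
    (d : ℕ) (hd : 1 ≤ d) (γ : ℝ)
    (R : EuclideanSpace ℝ (Fin d) → EuclideanSpace ℝ (Fin d) → ℝ)
    (hbdd : ∃ B : ℝ, ∀ t ∈ closedUnitCube d, ∀ s ∈ closedUnitCube d, |R t s| ≤ B)
    (h1 : ∃ C1 : ℝ, ∀ t ∈ closedUnitCube d, ∀ s ∈ closedUnitCube d, t ≠ s →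
      |R t t - R s s| ≤ C1 * ‖t - s‖)
    (h2 : ∃ C2 : ℝ, ∀ t ∈ closedUnitCube d, ∀ s ∈ closedUnitCube d, t ≠ s →
      |R t t + R s s - 2 * R t s| ≤ C2 * ‖t - s‖ ^ 2) :
    ∃ C : ℝ, ∀ t ∈ closedUnitCube d, ∀ s ∈ closedUnitCube d, t ≠ s →
      |Real.exp (γ ^ 2 * R t t) + Real.exp (γ ^ 2 * R s s) -
          2 * Real.exp (γ ^ 2 * R t s)| ≤ C * ‖t - s‖ ^ 2 := by
  obtain ⟨B, hB⟩ := hbdd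
  obtain ⟨C1, hC1⟩ := h1
  obtain ⟨C2, hC2⟩ := h2
  set M : ℝ := γ ^ 2 * B with hM
  refine ⟨Real.exp M * (γ ^ 4 * C1 ^ 2 / 4) + Real.exp M * (γ ^ 2 * C2),
    fun t ht s hs hts => ?_⟩
  set a := γ ^ 2 * R t t
  set b := γ ^ 2 * R s s
  set c := γ ^ 2 * R t s
  have hγ : (0:ℝ) ≤ γ ^ 2 := sq_nonneg γ
  have haM : a ≤ M := mul_le_mul_of_nonneg_left (le_trans (le_abs_self _) (hB t ht t ht)) hγ
  have hbM : b ≤ M := mul_le_mul_of_nonneg_left (le_trans (le_abs_self _) (hB s hs s hs)) hγ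
  have hcM : c ≤ M := mul_le_mul_of_nonneg_left (le_trans (le_abs_self _) (hB t ht s hs)) hγ
  have hmM : (a + b) / 2 ≤ M := by linarith
  have haM2 : a / 2 ≤ M / 2 := by linarith
  have hbM2 : b / 2 ≤ M / 2 := by linarith
  -- identity
  have hid : Real.exp a + Real.exp b - 2 * Real.exp ((a + b) / 2) =
      (Real.exp (a / 2) - Real.exp (b / 2)) ^ 2 := by
    have e1 : Real.exp a = Real.exp (a / 2) ^ 2 := by
      rw [← Real.exp_nat_mul]; norm_num; congr 1; ring
    have e2 : Real.exp b = Real.exp (b / 2) ^ 2 := by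
      rw [← Real.exp_nat_mul]; norm_num; congr 1; ring
    have e3 : Real.exp ((a + b) / 2) = Real.exp (a / 2) * Real.exp (b / 2) := by
      rw [← Real.exp_add]; ring_nf
    rw [e1, e2, e3]; ring
  have hsq : (Real.exp (a / 2) - Real.exp (b / 2)) ^ 2 ≤
      Real.exp M * (γ ^ 4 * C1 ^ 2 / 4) * ‖t - s‖ ^ 2 := by
    have step : |Real.exp (a / 2) - Real.exp (b / 2)| ≤
        Real.exp (M / 2) * (γ ^ 2 * (C1 * ‖t - s‖) / 2) := by
      refine (exp_lip haM2 hbM2).trans ?_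
      have hab : |a / 2 - b / 2| ≤ γ ^ 2 * (C1 * ‖t - s‖) / 2 := by
        have : |a - b| ≤ γ ^ 2 * (C1 * ‖t - s‖) := by
          have := hC1 t ht s hs hts
          calc |a - b| = γ ^ 2 * |R t t - R s s| := by
                rw [← abs_of_nonneg hγ, ← abs_mul]; ring_nf; rfl
            _ ≤ γ ^ 2 * (C1 * ‖t - s‖) := mul_le_mul_of_nonneg_left this hγ
        calc |a / 2 - b / 2| = |a - b| / 2 := by
              rw [show a / 2 - b / 2 = (a - b) / 2 by ring, abs_div]; norm_num
          _ ≤ γ ^ 2 * (C1 * ‖t - s‖) / 2 := by linarith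
      exact mul_le_mul_of_nonneg_left hab (Real.exp_pos _).le
    calc (Real.exp (a / 2) - Real.exp (b / 2)) ^ 2
        = |Real.exp (a / 2) - Real.exp (b / 2)| ^ 2 := (sq_abs _).symm
      _ ≤ (Real.exp (M / 2) * (γ ^ 2 * (C1 * ‖t - s‖) / 2)) ^ 2 := by
          apply pow_le_pow_left₀ (abs_nonneg _) step
      _ = Real.exp (M / 2) ^ 2 * (γ ^ 4 * ((C1 * ‖t - s‖) ^ 2) / 4) := by ring
      _ = Real.exp M * (γ ^ 4 * C1 ^ 2 / 4) * ‖t - s‖ ^ 2 := by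
          rw [← Real.exp_nat_mul]; push_cast; ring_nf
  have hmid : |Real.exp ((a + b) / 2) - Real.exp c| ≤
      Real.exp M * (γ ^ 2 * C2 / 2) * ‖t - s‖ ^ 2 := by
    refine (exp_lip hmM hcM).trans ?_
    have : |(a + b) / 2 - c| ≤ γ ^ 2 * (C2 * ‖t - s‖ ^ 2) / 2 := by
      have key := hC2 t ht s hs hts
      have : |(a + b) - 2 * c| ≤ γ ^ 2 * (C2 * ‖t - s‖ ^ 2) := by
        calc |(a + b) - 2 * c| = γ ^ 2 * |R t t + R s s - 2 * R t s| := by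
              rw [← abs_of_nonneg hγ, ← abs_mul]; ring_nf; rfl
          _ ≤ γ ^ 2 * (C2 * ‖t - s‖ ^ 2) := mul_le_mul_of_nonneg_left key hγ
      calc |(a + b) / 2 - c| = |(a + b) - 2 * c| / 2 := by
            rw [show (a + b) / 2 - c = ((a + b) - 2 * c) / 2 by ring, abs_div]; norm_num
        _ ≤ γ ^ 2 * (C2 * ‖t - s‖ ^ 2) / 2 := by linarith
    calc Real.exp M * |(a + b) / 2 - c|
        ≤ Real.exp M * (γ ^ 2 * (C2 * ‖t - s‖ ^ 2) / 2) :=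
          mul_le_mul_of_nonneg_left this (Real.exp_pos _).le
      _ = Real.exp M * (γ ^ 2 * C2 / 2) * ‖t - s‖ ^ 2 := by ring
  calc |Real.exp a + Real.exp b - 2 * Real.exp c|
      = |(Real.exp a + Real.exp b - 2 * Real.exp ((a + b) / 2)) +
          2 * (Real.exp ((a + b) / 2) - Real.exp c)| := by ring_nf
    _ ≤ |Real.exp a + Real.exp b - 2 * Real.exp ((a + b) / 2)| +
          |2 * (Real.exp ((a + b) / 2) - Real.exp c)| := abs_add_le _ _
    _ = (Real.exp (a / 2) - Real.exp (b / 2)) ^ 2 +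
          2 * |Real.exp ((a + b) / 2) - Real.exp c| := by
        rw [hid, abs_of_nonneg (sq_nonneg _), abs_mul]; norm_num
    _ ≤ Real.exp M * (γ ^ 4 * C1 ^ 2 / 4) * ‖t - s‖ ^ 2 +
          2 * (Real.exp M * (γ ^ 2 * C2 / 2) * ‖t - s‖ ^ 2) := by
        have := hsq; have := hmid; linarith
    _ = (Real.exp M * (γ ^ 4 * C1 ^ 2 / 4) + Real.exp M * (γ ^ 2 * C2)) * ‖t - s‖ ^ 2 := by
        ring

end
end

section
/- Computation of χ(b, Λ_α) for the canonical Mandelbrot covering intensity. Let α ∈ (0,1) and let b ≥ 2 be an integer. Let Λ_α := ∑_{n=1}^∞ δ_{α/n} be the sum of Dirac masses at the points α/n. Then limsup_{j→∞} ∫_{[b^{−j}, b^{−(j−1)})} y Λ_α(dy) = α·log b; explicitly, ∫_{[b^{−j}, b^{−(j−1)})} y Λ_α(dy) = ∑_{n∈ℕ: α b^{j−1} < n ≤ α b^j} α/n, and limsup_{j→∞} of this quantity equals α·log b. -/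
open MeasureTheory Filter
open Topology

noncomputable section

/-- The canonical Mandelbrot covering intensity `Λ_α = ∑_{n=1}^∞ δ_{α/n}`
(indexed here by `n+1` with `n : ℕ`). -/
def LambdaAlpha (α : ℝ) : Measure ℝ :=
  Measure.sum fun n : ℕ => Measure.dirac (α / (n + 1))

private lemma harmonic_eq_sum_Ioc (n : ℕ) :
    ((harmonic n : ℝ)) = ∑ m ∈ Finset.Ioc 0 n, (1 : ℝ) / m := by
  induction n with
  | zero => simp [harmonic]
  | succ n ih =>
      rw [Finset.sum_Ioc_succ_top (Nat.zero_le _), ← ih, harmonic_succ]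
      push_cast
      ring

private lemma sum_Ioc_div (α : ℝ) {a c : ℕ} (hac : a ≤ c) :
    ∑ m ∈ Finset.Ioc a c, α / (m : ℝ) =
      α * ((harmonic c : ℝ) - (harmonic a : ℝ)) := by
  have h := Finset.sum_Ioc_consecutive (fun m : ℕ => (1 : ℝ) / m) (Nat.zero_le a) hac
  rw [harmonic_eq_sum_Ioc, harmonic_eq_sum_Ioc, ← h, add_sub_cancel_left, Finset.mul_sum]
  exact Finset.sum_congr rfl fun m _ => by ring

private lemma tsum_eq_ofReal (α : ℝ) (hα0 : 0 < α) (b : ℕ) (hb : 2 ≤ b) (j : ℕ) :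
    (∑' n : {n : ℕ // α * (b : ℝ) ^ ((j : ℤ) - 1) < (n : ℝ) ∧
        (n : ℝ) ≤ α * (b : ℝ) ^ (j : ℤ)},
      ENNReal.ofReal (α / ((n : ℕ) : ℝ))) =
    ENNReal.ofReal (α * ((harmonic ⌊α * (b : ℝ) ^ (j : ℤ)⌋₊ : ℝ) -
      (harmonic ⌊α * (b : ℝ) ^ ((j : ℤ) - 1)⌋₊ : ℝ))) := by
  classical
  have hbR : (0 : ℝ) < b := by positivity
  have hb1 : (1 : ℝ) ≤ b := by
    have : (1 : ℕ) ≤ b := by omega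
    exact_mod_cast this
  have hc : (0 : ℝ) < (b : ℝ) ^ (j : ℤ) := zpow_pos hbR _
  have hd : (0 : ℝ) < (b : ℝ) ^ ((j : ℤ) - 1) := zpow_pos hbR _
  set A : ℕ := ⌊α * (b : ℝ) ^ ((j : ℤ) - 1)⌋₊ with hA
  set B : ℕ := ⌊α * (b : ℝ) ^ (j : ℤ)⌋₊ with hB
  have hAB : A ≤ B := by
    apply Nat.floor_mono
    have h : (b : ℝ) ^ ((j : ℤ) - 1) ≤ (b : ℝ) ^ (j : ℤ) := by
      have h2 : (b : ℝ) ^ (((j : ℤ) - 1) + 1) = (b : ℝ) ^ ((j : ℤ) - 1) * b :=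
        zpow_add_one₀ hbR.ne' _
      have h3 : (b : ℝ) ^ ((j : ℤ) - 1) ≤ (b : ℝ) ^ (((j : ℤ) - 1) + 1) := by
        rw [h2]; exact le_mul_of_one_le_right hd.le hb1
      simpa using h3
    nlinarith
  have hset : {n : ℕ | α * (b : ℝ) ^ ((j : ℤ) - 1) < (n : ℝ) ∧
      (n : ℝ) ≤ α * (b : ℝ) ^ (j : ℤ)} = ↑(Finset.Ioc A B) := by
    ext m
    simp only [Set.mem_setOf_eq, Finset.coe_Ioc, Set.mem_Ioc]
    rw [hA, hB]
    constructor
    · rintro ⟨h1, h2⟩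
      exact ⟨(Nat.floor_lt (by positivity)).mpr h1, Nat.le_floor h2⟩
    · rintro ⟨h1, h2⟩
      refine ⟨(Nat.floor_lt (by positivity)).mp h1, ?_⟩
      calc (m : ℝ) ≤ (B : ℝ) := Nat.cast_le.mpr h2
        _ ≤ α * (b : ℝ) ^ (j : ℤ) := Nat.floor_le (by positivity)
  calc (∑' n : {n : ℕ // α * (b : ℝ) ^ ((j : ℤ) - 1) < (n : ℝ) ∧
          (n : ℝ) ≤ α * (b : ℝ) ^ (j : ℤ)}, ENNReal.ofReal (α / ((n : ℕ) : ℝ)))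
      = ∑' m : ℕ, Set.indicator (↑(Finset.Ioc A B) : Set ℕ)
          (fun m => ENNReal.ofReal (α / (m : ℝ))) m := by
        refine (tsum_subtype {n : ℕ | α * (b : ℝ) ^ ((j : ℤ) - 1) < (n : ℝ) ∧
          (n : ℝ) ≤ α * (b : ℝ) ^ (j : ℤ)} (fun m => ENNReal.ofReal (α / (m : ℝ)))).trans ?_
        rw [hset]
    _ = ∑ m ∈ Finset.Ioc A B, Set.indicator (↑(Finset.Ioc A B) : Set ℕ)
          (fun m => ENNReal.ofReal (α / (m : ℝ))) m := by
        apply tsum_eq_sum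
        intro m hm
        exact Set.indicator_of_notMem (by simpa using hm) _
    _ = ∑ m ∈ Finset.Ioc A B, ENNReal.ofReal (α / (m : ℝ)) :=
        Finset.sum_congr rfl fun m hm => Set.indicator_of_mem (by simpa using hm) _
    _ = ENNReal.ofReal (∑ m ∈ Finset.Ioc A B, α / (m : ℝ)) :=
        (ENNReal.ofReal_sum_of_nonneg fun i _ => by positivity).symm
    _ = ENNReal.ofReal (α * ((harmonic B : ℝ) - (harmonic A : ℝ))) := by
        rw [sum_Ioc_div α hAB]

private lemma tendsto_main (α : ℝ) (hα0 : 0 < α) (b : ℕ) (hb : 2 ≤ b) :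
    Tendsto (fun k : ℕ =>
        α * ((harmonic ⌊α * (b : ℝ) ^ (k + 1)⌋₊ : ℝ) - (harmonic ⌊α * (b : ℝ) ^ k⌋₊ : ℝ)))
      atTop (𝓝 (α * Real.log b)) := by
  have hb1 : (1 : ℝ) < b := by exact_mod_cast hb.trans_lt' (by norm_num)
  set x : ℕ → ℝ := fun k => α * (b : ℝ) ^ k with hxdef
  have hxpos : ∀ k, 0 < x k := fun k => by positivity
  have hx : Tendsto x atTop atTop :=
    (tendsto_pow_atTop_atTop_of_one_lt hb1).const_mul_atTop hα0
  set N : ℕ → ℕ := fun k => ⌊x k⌋₊ with hNdef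
  have hN : Tendsto N atTop atTop := (tendsto_nat_floor_atTop (α := ℝ)).comp hx
  have t1 : Tendsto (fun k => (harmonic (N k) : ℝ) - Real.log (N k)) atTop
      (𝓝 Real.eulerMascheroniConstant) := Real.tendsto_harmonic_sub_log.comp hN
  have hdiv : Tendsto (fun k => (N k : ℝ) / x k) atTop (𝓝 1) :=
    tendsto_nat_floor_div_atTop.comp hx
  have t2 : Tendsto (fun k => Real.log ((N k : ℝ) / x k)) atTop (𝓝 0) := by
    have := ((Real.continuousAt_log one_ne_zero).tendsto).comp hdiv
    simpa [Function.comp_def] using this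
  have shift : Tendsto (fun k : ℕ => k + 1) atTop atTop := tendsto_add_atTop_nat 1
  have main : Tendsto (fun k => ((harmonic (N (k + 1)) : ℝ) - Real.log (N (k + 1)))
      - ((harmonic (N k) : ℝ) - Real.log (N k))
      + (Real.log ((N (k + 1) : ℝ) / x (k + 1)) - Real.log ((N k : ℝ) / x k))
      + Real.log b) atTop (𝓝 (Real.log b)) := by
    have h := (((t1.comp shift).sub t1).add ((t2.comp shift).sub t2)).add
      (tendsto_const_nhds (x := Real.log b) (f := atTop (α := ℕ)))
    simpa using h
  have hev : ∀ᶠ k : ℕ in atTop, ((harmonic (N (k + 1)) : ℝ) - Real.log (N (k + 1)))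
      - ((harmonic (N k) : ℝ) - Real.log (N k))
      + (Real.log ((N (k + 1) : ℝ) / x (k + 1)) - Real.log ((N k : ℝ) / x k))
      + Real.log b
      = (harmonic (N (k + 1)) : ℝ) - (harmonic (N k) : ℝ) := by
    have hev0 : ∀ᶠ k : ℕ in atTop, 0 < N k := hN.eventually_gt_atTop 0
    have hev1 : ∀ᶠ k : ℕ in atTop, 0 < N (k + 1) := (hN.comp shift).eventually_gt_atTop 0
    filter_upwards [hev0, hev1] with k hk hk1
    have hNk : (0:ℝ) < N k := by exact_mod_cast hk
    have hNk1 : (0:ℝ) < N (k+1) := by exact_mod_cast hk1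
    have hx1 : x (k+1) = x k * b := by simp [hxdef, pow_succ]; ring
    have l1 : Real.log ((N k : ℝ) / x k) = Real.log (N k) - Real.log (x k) :=
      Real.log_div hNk.ne' (hxpos k).ne'
    have l2 : Real.log ((N (k+1) : ℝ) / x (k+1)) = Real.log (N (k+1)) - Real.log (x (k+1)) :=
      Real.log_div hNk1.ne' (hxpos (k+1)).ne'
    have l3 : Real.log (x (k+1)) = Real.log (x k) + Real.log b := by
      rw [hx1, Real.log_mul (hxpos k).ne' (by positivity)]
    rw [l1, l2, l3]; ring
  have := main.congr' hev
  simpa [mul_comm] using this.const_mul α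

private lemma lintegral_eq_tsum (α : ℝ) (hα0 : 0 < α) (b : ℕ) (hb : 2 ≤ b) (j : ℕ) :
    (∫⁻ y in Set.Ico ((b : ℝ) ^ (-(j : ℤ))) ((b : ℝ) ^ (-(j : ℤ) + 1)),
        ENNReal.ofReal y ∂(LambdaAlpha α)) =
      ∑' n : {n : ℕ // α * (b : ℝ) ^ ((j : ℤ) - 1) < (n : ℝ) ∧
          (n : ℝ) ≤ α * (b : ℝ) ^ (j : ℤ)},
        ENNReal.ofReal (α / ((n : ℕ) : ℝ)) := by
  classical
  have hbR : (0 : ℝ) < b := by positivity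
  have hc : (0 : ℝ) < (b : ℝ) ^ (j : ℤ) := zpow_pos hbR _
  have hd : (0 : ℝ) < (b : ℝ) ^ ((j : ℤ) - 1) := zpow_pos hbR _
  set P : ℕ → Prop := fun m => α * (b : ℝ) ^ ((j : ℤ) - 1) < (m : ℝ) ∧
      (m : ℝ) ≤ α * (b : ℝ) ^ (j : ℤ) with hPdef
  set s : Set ℝ := Set.Ico ((b : ℝ) ^ (-(j : ℤ))) ((b : ℝ) ^ (-(j : ℤ) + 1)) with hsdef
  have eq1 : (b : ℝ) ^ (-(j : ℤ)) = ((b : ℝ) ^ (j : ℤ))⁻¹ := zpow_neg _ _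
  have eq2 : (b : ℝ) ^ (-(j : ℤ) + 1) = ((b : ℝ) ^ ((j : ℤ) - 1))⁻¹ := by
    rw [← zpow_neg]; congr 1; ring
  have hmem : ∀ n : ℕ, (α / ((n : ℝ) + 1) ∈ s) ↔ P (n + 1) := by
    intro n
    have ht : (0 : ℝ) < (n : ℝ) + 1 := by positivity
    rw [hsdef, Set.mem_Ico, eq1, eq2, inv_eq_one_div, inv_eq_one_div,
      div_le_div_iff₀ hc ht, div_lt_div_iff₀ ht hd]
    simp only [hPdef, one_mul]
    push_cast
    tauto
  set F : ℕ → ENNReal := fun m => if P m then ENNReal.ofReal (α / (m : ℝ)) else 0 with hFdef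
  have hLHS : (∫⁻ y in s, ENNReal.ofReal y ∂(LambdaAlpha α)) = ∑' n : ℕ, F (n + 1) := by
    rw [LambdaAlpha, Measure.restrict_sum _ measurableSet_Ico, lintegral_sum_measure]
    refine tsum_congr fun n => ?_
    rw [setLIntegral_dirac' ENNReal.measurable_ofReal measurableSet_Ico]
    rw [hFdef]
    simp only []
    rw [if_congr (hmem n) rfl rfl]
    congr 2
    push_cast
    ring
  have hP0 : ¬ P 0 := by
    simp only [hPdef]
    push_cast
    intro h
    nlinarith [h.1]
  have hF0 : F 0 = 0 := if_neg hP0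
  have hRHS : (∑' n : {n : ℕ // α * (b : ℝ) ^ ((j : ℤ) - 1) < (n : ℝ) ∧
      (n : ℝ) ≤ α * (b : ℝ) ^ (j : ℤ)}, ENNReal.ofReal (α / ((n : ℕ) : ℝ))) = ∑' m : ℕ, F m := by
    refine (tsum_subtype {n : ℕ | P n} (fun m => ENNReal.ofReal (α / (m : ℝ)))).trans ?_
    refine tsum_congr fun m => ?_
    by_cases hm : P m <;> simp [Set.indicator_apply, Set.mem_setOf_eq, hm, hFdef]
  rw [hLHS, hRHS]
  conv_rhs => rw [tsum_eq_zero_add' ENNReal.summable]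
  rw [hF0, zero_add]

/-- Computation of `χ(b, Λ_α)` for the canonical Mandelbrot covering
intensity. For `α ∈ (0,1)` and an integer `b ≥ 2`:
`∫_{[b^{−j}, b^{−(j−1)})} y Λ_α(dy) = ∑_{n : αb^{j−1} < n ≤ αb^j} α/n` for every `j`, and
the limsup over `j → ∞` of these integrals equals `α·log b`. -/
theorem chi_canonical_covering
    (α : ℝ) (hα0 : 0 < α) (hα1 : α < 1) (b : ℕ) (hb : 2 ≤ b) :
    (∀ j : ℕ,
      (∫⁻ y in Set.Ico ((b : ℝ) ^ (-(j : ℤ))) ((b : ℝ) ^ (-(j : ℤ) + 1)),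
          ENNReal.ofReal y ∂(LambdaAlpha α)) =
        ∑' n : {n : ℕ // α * (b : ℝ) ^ ((j : ℤ) - 1) < (n : ℝ) ∧
            (n : ℝ) ≤ α * (b : ℝ) ^ (j : ℤ)},
          ENNReal.ofReal (α / ((n : ℕ) : ℝ))) ∧
    limsup (fun j : ℕ =>
        ∫⁻ y in Set.Ico ((b : ℝ) ^ (-(j : ℤ))) ((b : ℝ) ^ (-(j : ℤ) + 1)),
          ENNReal.ofReal y ∂(LambdaAlpha α)) atTop =
      ENNReal.ofReal (α * Real.log b) := by
  refine ⟨lintegral_eq_tsum α hα0 b hb, ?_⟩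
  have key : ∀ j : ℕ,
      (∫⁻ y in Set.Ico ((b : ℝ) ^ (-(j : ℤ))) ((b : ℝ) ^ (-(j : ℤ) + 1)),
          ENNReal.ofReal y ∂(LambdaAlpha α)) =
        ENNReal.ofReal (α * ((harmonic ⌊α * (b : ℝ) ^ (j : ℤ)⌋₊ : ℝ) -
          (harmonic ⌊α * (b : ℝ) ^ ((j : ℤ) - 1)⌋₊ : ℝ))) :=
    fun j => (lintegral_eq_tsum α hα0 b hb j).trans (tsum_eq_ofReal α hα0 b hb j)
  rw [funext key]
  have tg : Tendsto (fun j : ℕ => α * ((harmonic ⌊α * (b : ℝ) ^ (j : ℤ)⌋₊ : ℝ) -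
      (harmonic ⌊α * (b : ℝ) ^ ((j : ℤ) - 1)⌋₊ : ℝ))) atTop (𝓝 (α * Real.log b)) := by
    rw [← tendsto_add_atTop_iff_nat 1]
    refine (tendsto_main α hα0 b hb).congr fun k => ?_
    have e1 : (b : ℝ) ^ (((k + 1 : ℕ)) : ℤ) = (b : ℝ) ^ (k + 1) := by
      rw [zpow_natCast]
    have e2 : (b : ℝ) ^ ((((k + 1 : ℕ)) : ℤ) - 1) = (b : ℝ) ^ k := by
      rw [show (((k + 1 : ℕ)) : ℤ) - 1 = ((k : ℕ) : ℤ) by push_cast; ring, zpow_natCast]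
    rw [e1, e2]
  exact ((ENNReal.continuous_ofReal.tendsto _).comp tg).limsup_eq

end
end
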